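/- Let k be a natural number ≥ 1, n = 2^k, and c an odd integer. If c is congruent to an n-th power modulo 2^{2k+1}, then c is an n-th power in ℚ_2. -/

import Mathlib

/-- Lemma 3.2 (II): if `n = 2^k` with `k ≥ 1` and `c` is an odd integer which is an
`n`-th power modulo `2^(2k+1)`, then `c` is an `n`-th power in `ℚ_2`. -/
theorem stmt_1 (k : ℕ) (hk : 1 ≤ k) (c : ℤ) (hc : Odd c)
    (h : ∃ α : ℤ, Odd α ∧ α ^ (2 ^ k) ≡ c [ZMOD (2 ^ (2 * k + 1) : ℤ)]) :
    ∃ x : ℚ_[2], x ^ (2 ^ k) = (c : ℚ_[2]) := by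
  obtain ⟨α, hα, hmod⟩ := h
  have hdvd : (2 : ℤ) ^ (2 * k + 1) ∣ (α ^ (2 ^ k) - c) := Int.ModEq.dvd hmod.symm
  set n := 2 ^ k with hn
  set F : Polynomial ℤ_[2] := Polynomial.X ^ n - Polynomial.C ((c : ℤ_[2])) with hF
  have hαnorm : ‖(α : ℤ_[2])‖ = 1 := by
    rcases lt_or_eq_of_le (PadicInt.norm_le_one (α : ℤ_[2])) with hlt | he
    · exfalso
      rw [PadicInt.norm_int_lt_one_iff_dvd] at hlt
      exact (Int.not_even_iff_odd.mpr hα)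
        (by exact_mod_cast (even_iff_two_dvd.mpr (by exact_mod_cast hlt)))
    · exact he
  have hFeval : F.eval (α : ℤ_[2]) = ((α ^ n - c : ℤ) : ℤ_[2]) := by
    simp [hF]
  have hderiv : F.derivative = Polynomial.C (n : ℤ_[2]) * Polynomial.X ^ (n - 1) := by
    simp [hF, Polynomial.derivative_X_pow]
  have hFdnorm : ‖F.derivative.eval (α : ℤ_[2])‖ = (2 : ℝ) ^ (-(k : ℤ)) := by
    rw [hderiv]
    simp only [Polynomial.eval_mul, Polynomial.eval_C, Polynomial.eval_pow, Polynomial.eval_X]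
    rw [norm_mul, norm_pow, hαnorm, one_pow, mul_one]
    have : ((n : ℤ_[2])) = (2 : ℤ_[2]) ^ k := by norm_cast
    rw [this]
    have := PadicInt.norm_p_pow (p := 2) k
    simpa using this
  have hlt : ‖F.eval (α : ℤ_[2])‖ < ‖F.derivative.eval (α : ℤ_[2])‖ ^ 2 := by
    rw [hFeval, hFdnorm]
    have h1 : ‖((α ^ n - c : ℤ) : ℤ_[2])‖ ≤ (2 : ℝ) ^ (-(2 * k + 1 : ℕ) : ℤ) := by
      rw [show ((2:ℝ)) = ((2:ℕ):ℝ) by norm_num]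
      exact PadicInt.norm_int_le_pow_iff_dvd.mpr (by exact_mod_cast hdvd)
    calc ‖((α ^ n - c : ℤ) : ℤ_[2])‖ ≤ (2 : ℝ) ^ (-(2 * k + 1 : ℕ) : ℤ) := h1
      _ < ((2 : ℝ) ^ (-(k:ℤ))) ^ 2 := by
          rw [← zpow_natCast ((2:ℝ)^(-(k:ℤ))) 2, ← zpow_mul]
          apply zpow_lt_zpow_right₀ (by norm_num)
          push_cast; omega
  obtain ⟨z, hz, -⟩ := hensels_lemma hlt
  refine ⟨(z : ℚ_[2]), ?_⟩
  have : (z : ℤ_[2]) ^ n = (c : ℤ_[2]) := by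
    have := hz
    simp [hF, sub_eq_zero] at this
    exact this
  have := congrArg (PadicInt.Coe.ringHom (p := 2)) this
  push_cast at this
  exact_mod_cast this
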